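/- Let T be a power partial isometry on a Hilbert space H and let Q be the orthogonal projection onto ⋂_{n≥1} T*^n H. Then for each n ≥ 1, the restriction of T^n to the range of (1 − TT*)Q is an isometry onto the range of (T^n T*^n − T^{n+1} T*^{n+1})Q. -/

import Mathlib

open ContinuousLinearMap RCLike

section Aux

variable {H : Type*} [NormedAddCommGroup H] [InnerProductSpace ℂ H] [CompleteSpace H]

local notation "⟪" x ", " y "⟫" => @inner ℂ _ _ x y

variable {T : H →L[ℂ] H}

lemma aux_hT' (hT : ∀ n : ℕ, T ^ n * (adjoint T) ^ n * T ^ n = T ^ n) (k : ℕ) :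
    (adjoint T) ^ k * T ^ k * (adjoint T) ^ k = (adjoint T) ^ k := by
  have := congrArg star (hT k)
  simp only [star_mul, star_pow, star_eq_adjoint, adjoint_adjoint] at this
  rw [← mul_assoc] at this
  exact this

lemma aux_P_idem (hT : ∀ n : ℕ, T ^ n * (adjoint T) ^ n * T ^ n = T ^ n) (k : ℕ) :
    ((adjoint T) ^ k * T ^ k) * ((adjoint T) ^ k * T ^ k) = (adjoint T) ^ k * T ^ k := by
  calc ((adjoint T) ^ k * T ^ k) * ((adjoint T) ^ k * T ^ k)
      = ((adjoint T) ^ k * T ^ k * (adjoint T) ^ k) * T ^ k := by rw [← mul_assoc]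
    _ = (adjoint T) ^ k * T ^ k := by rw [aux_hT' hT]

lemma aux_inner1 (k : ℕ) (v : H) :
    ⟪(T ^ k) v, (T ^ k) v⟫ = ⟪v, ((adjoint T) ^ k * T ^ k) v⟫ := by
  have h : (adjoint T) ^ k = adjoint (T ^ k) := by
    rw [← star_eq_adjoint, ← star_eq_adjoint, star_pow]
  rw [h, ContinuousLinearMap.mul_apply, adjoint_inner_right]

lemma aux_inner2 (hT : ∀ n : ℕ, T ^ n * (adjoint T) ^ n * T ^ n = T ^ n) (k : ℕ) (v : H) :
    ⟪((adjoint T) ^ k * T ^ k) v, ((adjoint T) ^ k * T ^ k) v⟫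
      = ⟪v, ((adjoint T) ^ k * T ^ k) v⟫ := by
  have hsa : adjoint ((adjoint T) ^ k * T ^ k) = (adjoint T) ^ k * T ^ k := by
    rw [← star_eq_adjoint, star_mul, star_pow, star_pow, star_eq_adjoint, star_eq_adjoint,
      adjoint_adjoint]
  conv_lhs => rw [← adjoint_inner_right, hsa, ← ContinuousLinearMap.mul_apply, aux_P_idem hT]

lemma aux_norm_eq_P (hT : ∀ n : ℕ, T ^ n * (adjoint T) ^ n * T ^ n = T ^ n) (k : ℕ) (v : H) :
    ‖(T ^ k) v‖ = ‖((adjoint T) ^ k * T ^ k) v‖ := by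
  have h := (aux_inner1 (T := T) k v).trans (aux_inner2 hT k v).symm
  have h2 := congrArg re h
  rw [inner_self_eq_norm_sq, inner_self_eq_norm_sq] at h2
  nlinarith [norm_nonneg ((T ^ k) v), norm_nonneg (((adjoint T) ^ k * T ^ k) v)]

lemma aux_re_inner (hT : ∀ n : ℕ, T ^ n * (adjoint T) ^ n * T ^ n = T ^ n) (k : ℕ) (v : H) :
    re ⟪v, ((adjoint T) ^ k * T ^ k) v⟫ = ‖(T ^ k) v‖ ^ 2 := by
  rw [← aux_inner1 (T := T) k v, inner_self_eq_norm_sq]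

/-- contraction -/
lemma aux_contraction (hT : ∀ n : ℕ, T ^ n * (adjoint T) ^ n * T ^ n = T ^ n) (k : ℕ) (v : H) :
    ‖(T ^ k) v‖ ≤ ‖v‖ := by
  have h1 := aux_norm_eq_P hT k v
  have h2 := aux_re_inner hT k v
  have h3 := re_inner_le_norm (𝕜 := ℂ) v (((adjoint T) ^ k * T ^ k) v)
  rw [h2, ← h1] at h3
  nlinarith [norm_nonneg ((T ^ k) v), norm_nonneg v]

/-- equality case: norm preserved implies in range of S^k -/
lemma aux_eq_case (hT : ∀ n : ℕ, T ^ n * (adjoint T) ^ n * T ^ n = T ^ n) (k : ℕ) (v : H)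
    (hv : ‖(T ^ k) v‖ = ‖v‖) : ((adjoint T) ^ k) ((T ^ k) v) = v := by
  have h1 := aux_norm_eq_P hT k v
  have h2 := aux_re_inner hT k v
  have h4 : ‖v - ((adjoint T) ^ k * T ^ k) v‖ ^ 2 = 0 := by
    rw [norm_sub_sq (𝕜 := ℂ), h2, ← h1, hv]; ring
  have h5 : v - ((adjoint T) ^ k * T ^ k) v = 0 := by
    have hn : ‖v - ((adjoint T) ^ k * T ^ k) v‖ = 0 := by
      nlinarith [norm_nonneg (v - ((adjoint T) ^ k * T ^ k) v)]
    exact norm_eq_zero.mp hn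
  have := sub_eq_zero.mp h5
  rw [← ContinuousLinearMap.mul_apply]; exact this.symm

/-- isometry on range of S^k -/
lemma aux_isom (hT : ∀ n : ℕ, T ^ n * (adjoint T) ^ n * T ^ n = T ^ n) (k : ℕ) {v : H}
    (hv : v ∈ LinearMap.range (((adjoint T) ^ k : H →L[ℂ] H) : H →ₗ[ℂ] H)) :
    ((adjoint T) ^ k) ((T ^ k) v) = v ∧ ‖(T ^ k) v‖ = ‖v‖ := by
  obtain ⟨u, rfl⟩ := hv
  simp only [ContinuousLinearMap.coe_coe]
  have hfix : ((adjoint T) ^ k) ((T ^ k) (((adjoint T) ^ k) u)) = ((adjoint T) ^ k) u := by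
    have := congrArg (fun A => A u) (aux_hT' hT k)
    simpa [ContinuousLinearMap.mul_apply] using this
  refine ⟨hfix, ?_⟩
  have h2 := aux_re_inner hT k (((adjoint T) ^ k) u)
  rw [ContinuousLinearMap.mul_apply, hfix, inner_self_eq_norm_sq] at h2
  nlinarith [norm_nonneg ((T ^ k) (((adjoint T) ^ k) u)), norm_nonneg (((adjoint T) ^ k) u)]

/-- v ∈ range S^{m+1} → T v ∈ range S^m -/
lemma aux_step (hT : ∀ n : ℕ, T ^ n * (adjoint T) ^ n * T ^ n = T ^ n) (m : ℕ) {v : H}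
    (hv : v ∈ LinearMap.range (((adjoint T) ^ (m + 1) : H →L[ℂ] H) : H →ₗ[ℂ] H)) :
    T v ∈ LinearMap.range (((adjoint T) ^ m : H →L[ℂ] H) : H →ₗ[ℂ] H) := by
  have h1 : ‖(T ^ (m + 1)) v‖ = ‖v‖ := (aux_isom hT (m + 1) hv).2
  have hTv : (T ^ (m + 1)) v = (T ^ m) (T v) := by rw [pow_succ]; rfl
  have h2 : ‖T v‖ ≤ ‖v‖ := by
    have := aux_contraction hT 1 v; rwa [pow_one] at this
  have h3 : ‖(T ^ m) (T v)‖ ≤ ‖T v‖ := aux_contraction hT m (T v)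
  have h4 : ‖(T ^ m) (T v)‖ = ‖T v‖ := by rw [← hTv, h1]; linarith [hTv ▸ h1]
  exact ⟨(T ^ m) (T v), aux_eq_case hT m (T v) h4⟩

end Aux
theorem pow_isometry_between_ranges
    {H : Type*} [NormedAddCommGroup H] [InnerProductSpace ℂ H] [CompleteSpace H]
    (T : H →L[ℂ] H)
    (hT : ∀ n : ℕ, T ^ n * (adjoint T) ^ n * T ^ n = T ^ n)
    (Q : H →L[ℂ] H)
    -- `Q` is the orthogonal projection onto `⋂_{n ≥ 1} T*^n H`:
    (hQsa : IsSelfAdjoint Q)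
    (hQfix : ∀ x ∈ ⨅ n : ℕ, LinearMap.range (((adjoint T) ^ (n + 1) : H →L[ℂ] H) : H →ₗ[ℂ] H), Q x = x)
    (hQrange : ∀ x : H, Q x ∈ ⨅ n : ℕ, LinearMap.range (((adjoint T) ^ (n + 1) : H →L[ℂ] H) : H →ₗ[ℂ] H)) :
    ∀ n : ℕ, 1 ≤ n →
      (∀ y ∈ LinearMap.range (((1 - T * adjoint T) * Q : H →L[ℂ] H) : H →ₗ[ℂ] H), ‖(T ^ n) y‖ = ‖y‖) ∧
      (T ^ n) '' (LinearMap.range (((1 - T * adjoint T) * Q : H →L[ℂ] H) : H →ₗ[ℂ] H) : Set H) =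
        (LinearMap.range
          (((T ^ n * (adjoint T) ^ n - T ^ (n + 1) * (adjoint T) ^ (n + 1)) * Q :
            H →L[ℂ] H) : H →ₗ[ℂ] H) :
            Set H) := by
  set K := ⨅ n : ℕ, LinearMap.range (((adjoint T) ^ (n + 1) : H →L[ℂ] H) : H →ₗ[ℂ] H) with hK
  have hmemK : ∀ {v : H}, v ∈ K → ∀ k : ℕ,
      v ∈ LinearMap.range (((adjoint T) ^ (k + 1) : H →L[ℂ] H) : H →ₗ[ℂ] H) := by
    intro v hv k
    exact (Submodule.mem_iInf _).mp hv k
  have hKS : ∀ {v : H}, v ∈ K → adjoint T v ∈ K := by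
    intro v hv
    rw [hK, Submodule.mem_iInf]
    intro n
    match n with
    | 0 => exact ⟨v, by rw [pow_one]; rfl⟩
    | Nat.succ m =>
      obtain ⟨u, hu⟩ := hmemK hv m
      exact ⟨u, by simp only [ContinuousLinearMap.coe_coe] at hu ⊢; rw [pow_succ' (adjoint T) (m + 1), ContinuousLinearMap.mul_apply, hu]⟩
  have hKT : ∀ {v : H}, v ∈ K → T v ∈ K := by
    intro v hv
    rw [hK, Submodule.mem_iInf]
    intro n
    exact aux_step hT (n + 1) (hmemK hv (n + 1))
  have hKTpow : ∀ (k : ℕ) {v : H}, v ∈ K → (T ^ k) v ∈ K := by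
    intro k
    induction k with
    | zero => intro v hv; simpa using hv
    | succ j ih =>
      intro v hv
      have : (T ^ (j + 1)) v = (T ^ j) (T v) := by rw [pow_succ, ContinuousLinearMap.mul_apply]
      rw [this]
      exact ih (hKT hv)
  have hKSpow : ∀ (k : ℕ) {v : H}, v ∈ K → ((adjoint T) ^ k) v ∈ K := by
    intro k
    induction k with
    | zero => intro v hv; simpa using hv
    | succ j ih =>
      intro v hv
      have : ((adjoint T) ^ (j + 1)) v = ((adjoint T) ^ j) (adjoint T v) := by
        rw [pow_succ, ContinuousLinearMap.mul_apply]
      rw [this]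
      exact ih (hKS hv)
  intro n hn
  obtain ⟨m, rfl⟩ : ∃ m, n = m + 1 := ⟨n - 1, by omega⟩
  have happly : ∀ x : H, ((1 - T * adjoint T) * Q) x = Q x - T (adjoint T (Q x)) := by
    intro x
    simp [ContinuousLinearMap.mul_apply, sub_apply, one_apply]
  have hyrange : ∀ x : H, Q x - T (adjoint T (Q x)) ∈
      LinearMap.range (((adjoint T) ^ (m + 1) : H →L[ℂ] H) : H →ₗ[ℂ] H) := by
    intro x
    have hq := hQrange x
    exact sub_mem (hmemK hq m) (aux_step hT (m + 1) (hmemK (hKS hq) (m + 1)))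
  constructor
  · rintro y ⟨x, rfl⟩
    rw [ContinuousLinearMap.coe_coe, happly x]
    exact (aux_isom hT (m + 1) (hyrange x)).2
  · ext z
    simp only [Set.mem_image, SetLike.mem_coe, LinearMap.mem_range]
    constructor
    · rintro ⟨y, ⟨x, rfl⟩, rfl⟩
      have hqK := hQrange x
      refine ⟨(T ^ (m + 1)) (Q x), ?_⟩
      have hfixq : Q ((T ^ (m + 1)) (Q x)) = (T ^ (m + 1)) (Q x) :=
        hQfix _ (hKTpow (m + 1) hqK)
      have key1 : ((adjoint T) ^ (m + 1)) ((T ^ (m + 1)) (Q x)) = Q x :=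
        (aux_isom hT (m + 1) (hmemK hqK m)).1
      have key2 : ((adjoint T) ^ (m + 1 + 1)) ((T ^ (m + 1)) (Q x)) = adjoint T (Q x) := by
        rw [pow_succ' (adjoint T) (m + 1), ContinuousLinearMap.mul_apply, key1]
      simp only [ContinuousLinearMap.coe_coe]
      rw [happly x]
      simp only [ContinuousLinearMap.mul_apply, sub_apply, hfixq, key1, key2, map_sub]
      rw [pow_succ T (m + 1), ContinuousLinearMap.mul_apply]
    · rintro ⟨x, rfl⟩
      have hqK := hQrange x
      set w := ((adjoint T) ^ (m + 1)) (Q x) with hw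
      have hwK : w ∈ K := hKSpow (m + 1) hqK
      refine ⟨((1 - T * adjoint T) * Q) w, ⟨w, rfl⟩, ?_⟩
      have hfixw : Q w = w := hQfix _ hwK
      rw [happly w, hfixw, map_sub, hw]
      simp only [ContinuousLinearMap.mul_apply, sub_apply, ContinuousLinearMap.coe_coe]
      congr 1
      rw [pow_succ T (m + 1), pow_succ' (adjoint T) (m + 1)]
      simp only [ContinuousLinearMap.mul_apply]
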